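/- Let n be odd. Then for all i with 1 ≤ i ≤ (n-1)/2, one has K_{2i}((n-1)/2, n) = K_{2i+1}((n-1)/2, n). -/

import Mathlib

open Finset Polynomial

def K (i k n : ℕ) : ℤ :=
  ∑ j ∈ Finset.range (i + 1), (-1) ^ j * (Nat.choose k j) * (Nat.choose (n - k) (i - j))

lemma coeff_one_sub_X_pow (k j : ℕ) :
    ((1 - X : ℤ[X]) ^ k).coeff j = (-1) ^ j * (Nat.choose k j) := by
  have h : (1 - X : ℤ[X]) ^ k =
      ∑ m ∈ Finset.range (k + 1), C ((-1) ^ m * (Nat.choose k m : ℤ)) * X ^ m := by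
    rw [sub_eq_add_neg, add_comm, add_pow]
    refine Finset.sum_congr rfl fun m hm => ?_
    rw [neg_pow, one_pow, mul_one, map_mul, map_pow, map_neg, map_one, map_natCast]
    ring
  rw [h, finset_sum_coeff]
  simp only [coeff_C_mul, coeff_X_pow, mul_ite, mul_one, mul_zero]
  by_cases hj : j ≤ k
  · rw [Finset.sum_ite_eq, if_pos (Finset.mem_range.mpr (Nat.lt_succ_of_le hj))]
  · rw [Finset.sum_eq_zero, Nat.choose_eq_zero_of_lt (lt_of_not_ge hj), Nat.cast_zero, mul_zero]
    intro m hm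
    have : j ≠ m := by
      rintro rfl
      exact hj (Nat.le_of_lt_succ (Finset.mem_range.mp hm))
    simp [this]

lemma K_eq_coeff (i k : ℕ) :
    K i k (2 * k + 1) = ((1 - X : ℤ[X]) ^ k * (1 + X) ^ (k + 1)).coeff i := by
  rw [coeff_mul, Finset.Nat.sum_antidiagonal_eq_sum_range_succ_mk]
  have hk : 2 * k + 1 - k = k + 1 := by omega
  rw [K, hk]
  refine Finset.sum_congr rfl fun j _ => ?_
  rw [coeff_one_sub_X_pow, coeff_one_add_X_pow]

lemma odd_coeff_zero (k m : ℕ) (hm : Odd m) : ((1 - X ^ 2 : ℤ[X]) ^ k).coeff m = 0 := by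
  have h : (1 - X ^ 2 : ℤ[X]) ^ k =
      ∑ j ∈ Finset.range (k + 1), C ((-1) ^ j * (Nat.choose k j : ℤ)) * X ^ (2 * j) := by
    rw [sub_eq_add_neg, add_comm, add_pow]
    refine Finset.sum_congr rfl fun j hj => ?_
    rw [neg_pow, one_pow, mul_one, map_mul, map_pow, map_neg, map_one, map_natCast, ← pow_mul]
    ring
  rw [h, finset_sum_coeff]
  refine Finset.sum_eq_zero fun j _ => ?_
  have : m ≠ 2 * j := fun h => by simp [h, Nat.even_iff, Nat.odd_iff] at hm
  rw [coeff_C_mul, coeff_X_pow, if_neg this, mul_zero]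

theorem stmt9 (n i : ℕ) (hn : Odd n) (hi1 : 1 ≤ i) (hi2 : i ≤ (n - 1) / 2) :
    K (2 * i) ((n - 1) / 2) n = K (2 * i + 1) ((n - 1) / 2) n := by
  obtain ⟨k, rfl⟩ := hn
  have hk : (2 * k + 1 - 1) / 2 = k := by omega
  rw [hk, K_eq_coeff, K_eq_coeff]
  have hfac : (1 - X : ℤ[X]) ^ k * (1 + X) ^ (k + 1)
      = (1 - X ^ 2) ^ k * (1 + X) := by
    rw [pow_succ, ← mul_assoc, ← mul_pow]
    ring_nf
  rw [hfac]
  set P : ℤ[X] := (1 - X ^ 2) ^ k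
  have h1 : (P * (1 + X)).coeff (2 * i) = P.coeff (2 * i) + P.coeff (2 * i - 1) := by
    rw [mul_add, mul_one, coeff_add]
    congr 1
    have : 2 * i = (2 * i - 1) + 1 := by omega
    conv_lhs => rw [this]
    rw [coeff_mul_X]
  have h2 : (P * (1 + X)).coeff (2 * i + 1) = P.coeff (2 * i + 1) + P.coeff (2 * i) := by
    rw [mul_add, mul_one, coeff_add, coeff_mul_X]
  rw [h1, h2, odd_coeff_zero k (2 * i - 1) ⟨i - 1, by omega⟩,
    odd_coeff_zero k (2 * i + 1) ⟨i, by omega⟩, add_zero, zero_add]
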